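/- arXiv:0912.0330 — 4 statements merged into one kernel-verified Lean document; each statement's English description precedes it below -/
import Mathlib

section
/- For every ε > 0 and every R > 1 there exist constants A > 1 and C > 0, depending only on ε and R, with the following property: for every continuous function k : ℝ → ℝ with k ≥ 0 on [0,∞) and k(r) ≥ (1+ε)/(r² log r) for all r > R, and every twice continuously differentiable f : ℝ → ℝ with f''(r) = k(r) f(r) for r ≥ 0, f(0) = 0 and f'(0) = 1, one has f(r) ≥ r (log r)^{1+ε} / C for all r ≥ A. -/
open Real Set


/-- monotonicity helper -/
lemma mono_aux {x y : ℝ} (u u' : ℝ → ℝ) (hxy : x ≤ y)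
    (hd : ∀ s ∈ Set.Icc x y, HasDerivAt u (u' s) s)
    (h0 : ∀ s ∈ Set.Ioo x y, 0 ≤ u' s) : u x ≤ u y := by
  rcases eq_or_lt_of_le hxy with rfl | hlt
  · exact le_rfl
  have hc : ContinuousOn u (Set.Icc x y) :=
    fun s hs => (hd s hs).continuousAt.continuousWithinAt
  have hint : interior (Set.Icc x y) = Set.Ioo x y := interior_Icc
  have hmono : MonotoneOn u (Set.Icc x y) := by
    apply monotoneOn_of_deriv_nonneg (convex_Icc x y) hc
    · intro s hs
      rw [hint] at hs
      exact ((hd s (Set.Ioo_subset_Icc_self hs)).differentiableAt).differentiableWithinAt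
    · intro s hs
      rw [hint] at hs
      rw [(hd s (Set.Ioo_subset_Icc_self hs)).deriv]
      exact h0 s hs
  exact hmono (Set.left_mem_Icc.2 hxy) (Set.right_mem_Icc.2 hxy) hxy

/-- ODE comparison / positivity lemma -/
lemma ode_comparison (a : ℝ) (w w' w'' q : ℝ → ℝ)
    (hw : ∀ t ∈ Set.Ici a, HasDerivAt w (w' t) t)
    (hw' : ∀ t ∈ Set.Ici a, HasDerivAt w' (w'' t) t)
    (hq : ∀ t ∈ Set.Ici a, 0 ≤ q t)
    (hcmp : ∀ t ∈ Set.Ici a, q t * w t ≤ w'' t)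
    (ha : 0 ≤ w a) (ha' : 0 < w' a) :
    ∀ t ∈ Set.Ici a, w a + w' a * (t - a) ≤ w t ∧ w' a ≤ w' t := by
  have key : ∀ T, a ≤ T → ∀ s ∈ Set.Icc a T, w' a / 2 < w' s := by
    intro T hT
    by_contra hcon
    push_neg at hcon
    obtain ⟨s₀, hs₀, hs₀'⟩ := hcon
    have hBclosed : IsClosed {s | s ∈ Set.Icc a T ∧ w' s ≤ w' a / 2} := by
      have hcts : ContinuousOn w' (Set.Icc a T) :=
        fun s hs => (hw' s hs.1).continuousAt.continuousWithinAt
      exact hcts.preimage_isClosed_of_isClosed isClosed_Icc isClosed_Iic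
    have hBne : {s | s ∈ Set.Icc a T ∧ w' s ≤ w' a / 2}.Nonempty := ⟨s₀, hs₀, hs₀'⟩
    have hBdd : BddBelow {s | s ∈ Set.Icc a T ∧ w' s ≤ w' a / 2} :=
      ⟨a, fun s hs => hs.1.1⟩
    set c := sInf {s | s ∈ Set.Icc a T ∧ w' s ≤ w' a / 2} with hc_def
    have hcB : c ∈ {s | s ∈ Set.Icc a T ∧ w' s ≤ w' a / 2} :=
      hBclosed.csInf_mem hBne hBdd
    have hac : a < c := by
      rcases eq_or_lt_of_le hcB.1.1 with h | h
      · exfalso; have := hcB.2; rw [← h] at this; linarith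
      · exact h
    have hlt : ∀ s ∈ Set.Ico a c, w' a / 2 < w' s := by
      intro s hs
      by_contra h
      push_neg at h
      have hsB : s ∈ {s | s ∈ Set.Icc a T ∧ w' s ≤ w' a / 2} :=
        ⟨⟨hs.1, le_trans hs.2.le hcB.1.2⟩, h⟩
      exact absurd (csInf_le hBdd hsB) (not_le.mpr hs.2)
    have hwpos : ∀ s ∈ Set.Icc a c, 0 ≤ w s := by
      intro s hs
      have hws : w a ≤ w s := by
        apply mono_aux w w' hs.1
        · exact fun u hu => hw u hu.1
        · intro u hu
          have : w' a / 2 < w' u := hlt u ⟨hu.1.le, lt_of_lt_of_le hu.2 hs.2⟩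
          linarith
      linarith
    have hwc : w' a ≤ w' c := by
      apply mono_aux w' w'' hac.le
      · exact fun u hu => hw' u hu.1
      · intro u hu
        have hu' : u ∈ Set.Ici a := hu.1.le
        exact le_trans (mul_nonneg (hq u hu') (hwpos u ⟨hu.1.le, hu.2.le⟩)) (hcmp u hu')
    have := hcB.2
    linarith
  intro t ht
  have hwpos : ∀ s ∈ Set.Icc a t, 0 ≤ w s := by
    intro s hs
    have hws : w a ≤ w s := by
      apply mono_aux w w' hs.1
      · exact fun u hu => hw u hu.1
      · intro u hu
        have := key t ht u ⟨hu.1.le, le_trans hu.2.le hs.2⟩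
        linarith
    linarith
  have hmono' : ∀ s ∈ Set.Icc a t, w' a ≤ w' s := by
    intro s hs
    apply mono_aux w' w'' hs.1
    · exact fun u hu => hw' u hu.1
    · intro u hu
      have hu' : u ∈ Set.Ici a := hu.1.le
      exact le_trans (mul_nonneg (hq u hu') (hwpos u ⟨hu.1.le, le_trans hu.2.le hs.2⟩))
        (hcmp u hu')
  refine ⟨?_, hmono' t (Set.right_mem_Icc.2 ht)⟩
  have hv : w a - w' a * a ≤ w t - w' a * t := by
    apply mono_aux (fun y => w y - w' a * y) (fun y => w' y - w' a) ht
    · intro s hs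
      have h1 : HasDerivAt (fun y : ℝ => w' a * y) (w' a) s := by
        simpa using (hasDerivAt_id s).const_mul (w' a)
      exact (hw s hs.1).sub h1
    · intro u hu
      have := hmono' u (Set.Ioo_subset_Icc_self hu)
      linarith
  linarith
open Real Set

noncomputable def Gfun (ε : ℝ) : ℝ → ℝ := fun r =>
  r * Real.log r ^ (1 + ε) + 2 * ε * (1 + ε) * (r * Real.log r ^ ε)

noncomputable def Gfun1 (ε : ℝ) : ℝ → ℝ := fun r =>
  (Real.log r ^ (1 + ε) + (1 + ε) * Real.log r ^ ε)
    + 2 * ε * (1 + ε) * (Real.log r ^ ε + ε * Real.log r ^ (ε - 1))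

noncomputable def Gfun2 (ε : ℝ) : ℝ → ℝ := fun r =>
  ((1 + ε) * Real.log r ^ ε / r + (1 + ε) * (ε * Real.log r ^ (ε - 1) / r))
    + 2 * ε * (1 + ε) *
      (ε * Real.log r ^ (ε - 1) / r + ε * ((ε - 1) * Real.log r ^ (ε - 2) / r))

lemma hasDerivAt_logpow (p : ℝ) {x : ℝ} (hx : 1 < x) :
    HasDerivAt (fun r : ℝ => Real.log r ^ p) (p * Real.log x ^ (p - 1) / x) x := by
  have hx0 : x ≠ 0 := (lt_trans zero_lt_one hx).ne'
  have hl : HasDerivAt Real.log x⁻¹ x := Real.hasDerivAt_log hx0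
  have hp : HasDerivAt (fun y : ℝ => y ^ p) (p * Real.log x ^ (p - 1)) (Real.log x) :=
    Real.hasDerivAt_rpow_const (Or.inl (Real.log_pos hx).ne')
  have := hp.comp x hl
  rw [div_eq_mul_inv]; exact this

lemma hasDerivAt_mul_logpow (p : ℝ) {x : ℝ} (hx : 1 < x) :
    HasDerivAt (fun r : ℝ => r * Real.log r ^ p)
      (Real.log x ^ p + p * Real.log x ^ (p - 1)) x := by
  have hx0 : x ≠ 0 := (lt_trans zero_lt_one hx).ne'
  have := (hasDerivAt_id x).mul (hasDerivAt_logpow p hx)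
  rw [id_eq, one_mul, mul_div_assoc', mul_div_cancel_left₀ _ hx0] at this
  exact this

lemma Gfun_deriv (ε : ℝ) {x : ℝ} (hx : 1 < x) :
    HasDerivAt (Gfun ε) (Gfun1 ε x) x := by
  have h := (hasDerivAt_mul_logpow (1 + ε) hx).add
    ((hasDerivAt_mul_logpow ε hx).const_mul (2 * ε * (1 + ε)))
  have e : (1 : ℝ) + ε - 1 = ε := by ring
  rw [e] at h
  exact h

lemma Gfun1_deriv (ε : ℝ) {x : ℝ} (hx : 1 < x) :
    HasDerivAt (Gfun1 ε) (Gfun2 ε x) x := by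
  have h := ((hasDerivAt_logpow (1 + ε) hx).add
      ((hasDerivAt_logpow ε hx).const_mul (1 + ε))).add
    (((hasDerivAt_logpow ε hx).add
      ((hasDerivAt_logpow (ε - 1) hx).const_mul ε)).const_mul (2 * ε * (1 + ε)))
  have e : (1 : ℝ) + ε - 1 = ε := by ring
  have e2 : ε - 1 - 1 = ε - 2 := by ring
  rw [e, e2] at h
  exact h
lemma Gfun_pos (ε : ℝ) (hε : 0 < ε) {x : ℝ} (hx : 1 < x) : 0 < Gfun ε x := by
  have hx0 : 0 < x := lt_trans zero_lt_one hx
  have hL : 0 < Real.log x := Real.log_pos hx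
  have h1 : 0 < Real.log x ^ (1 + ε) := Real.rpow_pos_of_pos hL _
  have h2 : 0 < Real.log x ^ ε := Real.rpow_pos_of_pos hL _
  unfold Gfun
  positivity

lemma Gfun1_pos (ε : ℝ) (hε : 0 < ε) {x : ℝ} (hx : 1 < x) : 0 < Gfun1 ε x := by
  have hL : 0 < Real.log x := Real.log_pos hx
  have h1 : 0 < Real.log x ^ (1 + ε) := Real.rpow_pos_of_pos hL _
  have h2 : 0 < Real.log x ^ ε := Real.rpow_pos_of_pos hL _
  have h3 : 0 < Real.log x ^ (ε - 1) := Real.rpow_pos_of_pos hL _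
  unfold Gfun1
  positivity

lemma Gfun_lower (ε : ℝ) (hε : 0 < ε) {x : ℝ} (hx : 1 < x) :
    x * Real.log x ^ (1 + ε) ≤ Gfun ε x := by
  have hx0 : 0 < x := lt_trans zero_lt_one hx
  have hL : 0 < Real.log x := Real.log_pos hx
  have h2 : 0 < Real.log x ^ ε := Real.rpow_pos_of_pos hL _
  unfold Gfun
  nlinarith [mul_pos hx0 h2, mul_pos hε (by linarith : (0:ℝ) < 1 + ε)]

lemma Gfun_sub (ε : ℝ) (hε : 0 < ε) {x : ℝ} (hx : 1 < x)
    (hLge : 2 * ε * (1 + ε) + 1 ≤ Real.log x) :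
    Gfun2 ε x ≤ (1 + ε) / (x ^ 2 * Real.log x) * Gfun ε x := by
  have hx0 : 0 < x := lt_trans zero_lt_one hx
  have hL : 0 < Real.log x := Real.log_pos hx
  set L := Real.log x with hLdef
  have hu : 0 < L ^ (ε - 2) := Real.rpow_pos_of_pos hL _
  set u := L ^ (ε - 2) with hudef
  have e1 : L ^ (ε - 1) = u * L := by
    rw [hudef, show ε - 1 = (ε - 2) + 1 by ring, Real.rpow_add hL, Real.rpow_one]
  have e2 : L ^ ε = u * (L * L) := by
    rw [hudef, show ε = (ε - 2) + 2 by ring, Real.rpow_add hL,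
      show (2:ℝ) = ((2:ℕ):ℝ) by norm_num, Real.rpow_natCast]
    ring
  have e3 : L ^ (1 + ε) = u * (L * L * L) := by
    rw [hudef, show 1 + ε = (ε - 2) + 3 by ring, Real.rpow_add hL,
      show (3:ℝ) = ((3:ℕ):ℝ) by norm_num, Real.rpow_natCast]
    ring
  have hB : (0:ℝ) < 1 + ε := by linarith
  have hlhs : Gfun2 ε x = ((1 + ε) * (u * (L * L)) + (1 + ε) * (ε * (u * L))
      + 2 * ε * (1 + ε) * (ε * (u * L) + ε * ((ε - 1) * u))) / x := by
    unfold Gfun2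
    rw [← hLdef, e1, e2]
    field_simp
    rw [← hudef]; ring
  have hrhs : (1 + ε) / (x ^ 2 * Real.log x) * Gfun ε x
      = ((1 + ε) * (u * (L * L)) + (1 + ε) * (2 * ε * (1 + ε)) * (u * L)) / x := by
    unfold Gfun
    rw [← hLdef, e2, e3]
    field_simp
  rw [hlhs, hrhs, div_le_div_iff_of_pos_right hx0]
  have hmain : 2 * ε * (ε - 1) ≤ L := by nlinarith
  nlinarith [mul_nonneg (mul_nonneg (mul_nonneg hε.le hB.le) hu.le)
    (sub_nonneg.mpr hmain)]

/-- Milnor-type lower growth bound: for every ε > 0 and R > 1 there are A > 1 and C > 0,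
depending only on ε and R, such that every Jacobi field with potential
k(r) ≥ (1+ε)/(r² log r) for r > R satisfies f(r) ≥ r (log r)^{1+ε}/C for r ≥ A. -/
theorem stmt_5 (ε R : ℝ) (hε : 0 < ε) (hR : 1 < R) :
    ∃ A > (1 : ℝ), ∃ C > (0 : ℝ),
      ∀ k : ℝ → ℝ, Continuous k → (∀ r ≥ 0, 0 ≤ k r) →
        (∀ r > R, (1 + ε) / (r ^ 2 * Real.log r) ≤ k r) →
        ∀ f : ℝ → ℝ, ContDiff ℝ 2 f →
          (∀ r ≥ 0, deriv (deriv f) r = k r * f r) →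
          f 0 = 0 → deriv f 0 = 1 →
          ∀ r ≥ A, r * Real.log r ^ (1 + ε) / C ≤ f r := by
  set A : ℝ := max R (Real.exp (2 * ε * (1 + ε) + 1)) + 1 with hA_def
  have hA1 : 1 < A := by
    have := le_max_left R (Real.exp (2 * ε * (1 + ε) + 1))
    simp only [hA_def]; linarith
  have hAR : R < A := by
    have := le_max_left R (Real.exp (2 * ε * (1 + ε) + 1))
    simp only [hA_def]; linarith
  have hA0 : 0 < A := by linarith
  have hAL : ∀ x : ℝ, A ≤ x → 2 * ε * (1 + ε) + 1 ≤ Real.log x := by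
    intro x hx
    have h1 : Real.exp (2 * ε * (1 + ε) + 1) ≤ x := by
      have := le_max_right R (Real.exp (2 * ε * (1 + ε) + 1))
      rw [hA_def] at hx; linarith
    calc 2 * ε * (1 + ε) + 1 = Real.log (Real.exp (2 * ε * (1 + ε) + 1)) :=
          (Real.log_exp _).symm
      _ ≤ Real.log x := Real.log_le_log (Real.exp_pos _) h1
  have hGA : 0 < Gfun ε A := Gfun_pos ε hε hA1
  have hG1A : 0 < Gfun1 ε A := Gfun1_pos ε hε hA1
  set c : ℝ := min (A / Gfun ε A) (1 / (2 * Gfun1 ε A)) with hc_def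
  have hc : 0 < c := lt_min (div_pos hA0 hGA) (by positivity)
  refine ⟨A, hA1, 1 / c, by positivity, ?_⟩
  intro k hk hknn hklow f hf hode hf0 hf1
  have hfd : Differentiable ℝ f := hf.differentiable (by norm_num)
  have hfd2 : Differentiable ℝ (deriv f) := by
    have h2 : ContDiff ℝ (1 + 1) f := by
      have e : ((1 + 1 : WithTop ℕ∞)) = 2 := by norm_num
      rw [e]; exact hf
    rw [contDiff_succ_iff_deriv] at h2
    exact h2.2.2.differentiable (by norm_num)
  -- Step 1 : f r ≥ r and deriv f r ≥ 1 on [0, ∞)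
  have step1 := ode_comparison 0 f (deriv f) (deriv (deriv f)) k
    (fun t _ => (hfd t).hasDerivAt) (fun t _ => (hfd2 t).hasDerivAt)
    (fun t ht => hknn t ht) (fun t ht => le_of_eq (hode t ht).symm)
    (le_of_eq hf0.symm) (by rw [hf1]; norm_num)
  have hfr : ∀ t, 0 ≤ t → t ≤ f t := by
    intro t ht
    have := (step1 t ht).1
    rw [hf0, hf1] at this; linarith
  have hfr' : ∀ t, 0 ≤ t → 1 ≤ deriv f t := by
    intro t ht
    have := (step1 t ht).2
    rw [hf1] at this; linarith
  -- Step 2 : comparison with c * Gfun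
  have hx1 : ∀ x : ℝ, x ∈ Set.Ici A → 1 < x := fun x hx => lt_of_lt_of_le hA1 hx
  have hGle : ∀ x ∈ Set.Ici A, Gfun2 ε x ≤ k x * Gfun ε x := by
    intro x hx
    have h1 : 1 < x := hx1 x hx
    have h2 := Gfun_sub ε hε h1 (hAL x hx)
    have h3 : (1 + ε) / (x ^ 2 * Real.log x) ≤ k x := hklow x (lt_of_lt_of_le hAR hx)
    have h4 : 0 < Gfun ε x := Gfun_pos ε hε h1
    calc Gfun2 ε x ≤ (1 + ε) / (x ^ 2 * Real.log x) * Gfun ε x := h2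
      _ ≤ k x * Gfun ε x := mul_le_mul_of_nonneg_right h3 h4.le
  have hwA : (0:ℝ) ≤ f A - c * Gfun ε A := by
    have h1 : A ≤ f A := hfr A hA0.le
    have h2 : c * Gfun ε A ≤ A := by
      have hmin : c ≤ A / Gfun ε A := min_le_left _ _
      calc c * Gfun ε A ≤ A / Gfun ε A * Gfun ε A :=
            mul_le_mul_of_nonneg_right hmin hGA.le
        _ = A := by field_simp
    linarith
  have hwA' : (0:ℝ) < deriv f A - c * Gfun1 ε A := by
    have h1 : 1 ≤ deriv f A := hfr' A hA0.le
    have h2 : c * Gfun1 ε A ≤ 1 / 2 := by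
      have hmin : c ≤ 1 / (2 * Gfun1 ε A) := min_le_right _ _
      calc c * Gfun1 ε A ≤ 1 / (2 * Gfun1 ε A) * Gfun1 ε A :=
            mul_le_mul_of_nonneg_right hmin hG1A.le
        _ = 1 / 2 := by field_simp
    linarith
  have step2 := ode_comparison A (fun r => f r - c * Gfun ε r)
    (fun r => deriv f r - c * Gfun1 ε r)
    (fun r => deriv (deriv f) r - c * Gfun2 ε r) k
    (fun t ht => ((hfd t).hasDerivAt).sub ((Gfun_deriv ε (hx1 t ht)).const_mul c))
    (fun t ht => ((hfd2 t).hasDerivAt).sub ((Gfun1_deriv ε (hx1 t ht)).const_mul c))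
    (fun t ht => hknn t (by have := mem_Ici.mp ht; linarith))
    (by
      intro t ht
      have ht0 : (0:ℝ) ≤ t := by have := mem_Ici.mp ht; linarith
      show k t * (f t - c * Gfun ε t) ≤ deriv (deriv f) t - c * Gfun2 ε t
      have h2 : c * Gfun2 ε t ≤ c * (k t * Gfun ε t) :=
        mul_le_mul_of_nonneg_left (hGle t ht) hc.le
      have hode' := hode t ht0
      nlinarith [h2, hode'])
    (by simpa using hwA)
    (by simpa using hwA')
  -- conclusion
  intro r hr
  have hr1 : 1 < r := lt_of_lt_of_le hA1 hr
  have hw := (step2 r hr).1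
  have hfc : c * Gfun ε r ≤ f r := by
    have hra : 0 ≤ r - A := by have := mem_Ici.mp (show r ∈ Set.Ici A from hr); linarith
    nlinarith [hw, hwA, hwA', hra, mul_nonneg hwA'.le hra]
  have hlow : c * (r * Real.log r ^ (1 + ε)) ≤ c * Gfun ε r :=
    mul_le_mul_of_nonneg_left (Gfun_lower ε hε hr1) hc.le
  have heq : r * Real.log r ^ (1 + ε) / (1 / c) = c * (r * Real.log r ^ (1 + ε)) := by
    field_simp
  rw [heq]
  linarith
end

section
/- Let ε > 0 and R > 1. Let k : ℝ → ℝ be continuous with k ≥ 0 on [0,∞) and k(r) ≥ (1+ε)/(r² log r) for all r > R, and let f : ℝ → ℝ be twice continuously differentiable with f''(r) = k(r) f(r) for r ≥ 0, f(0) = 0 and f'(0) = 1. Then the improper integral ∫_1^∞ 1/f(r) dr is finite. -/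
open Real MeasureTheory Set

set_option maxHeartbeats 1000000 in
/-- Transience criterion: if k(r) ≥ (1+ε)/(r² log r) for r > R, then the Jacobi field f
with potential k satisfies ∫_1^∞ dr/f(r) < ∞. -/
theorem stmt_6 (ε R : ℝ) (hε : 0 < ε) (hR : 1 < R) (k f : ℝ → ℝ)
    (hk : Continuous k) (hk0 : ∀ r ≥ 0, 0 ≤ k r)
    (hklow : ∀ r > R, (1 + ε) / (r ^ 2 * Real.log r) ≤ k r)
    (hf : ContDiff ℝ 2 f)
    (hf'' : ∀ r ≥ 0, deriv (deriv f) r = k r * f r)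
    (hf0 : f 0 = 0) (hf'0 : deriv f 0 = 1) :
    IntegrableOn (fun r => 1 / f r) (Set.Ioi (1 : ℝ)) volume := by
  -- Regularity of f
  have h2 : ContDiff ℝ (1+1 : ℕ) f := by norm_num at hf ⊢; exact hf
  have hc1 : ContDiff ℝ 1 (deriv f) := (contDiff_succ_iff_deriv.mp h2).2.2
  have hdf : Differentiable ℝ f := h2.differentiable (by norm_num)
  have hdf' : Differentiable ℝ (deriv f) := hc1.differentiable (by norm_num)
  have hcf' : Continuous (deriv f) := h2.continuous_deriv (by norm_num)
  have hcf'' : Continuous (deriv (deriv f)) := hc1.continuous_deriv le_rfl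
  have ftc' : ∀ s t : ℝ, deriv f t - deriv f s = ∫ u in s..t, deriv (deriv f) u := by
    intro s t
    rw [intervalIntegral.integral_deriv_eq_sub (fun x _ => hdf' x)
      (hcf''.intervalIntegrable s t)]
  have ftc : ∀ s t : ℝ, f t - f s = ∫ u in s..t, deriv f u := by
    intro s t
    rw [intervalIntegral.integral_deriv_eq_sub (fun x _ => hdf x)
      (hcf'.intervalIntegrable s t)]
  have hd1 : ∀ b, 0 ≤ b → (∀ t ∈ Icc (0:ℝ) b, 0 ≤ f t) → ∀ t ∈ Icc (0:ℝ) b, 1 ≤ deriv f t := by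
    intro b hb hpos t ht
    have h1 := ftc' 0 t
    have hnn : 0 ≤ ∫ u in (0:ℝ)..t, deriv (deriv f) u := by
      apply intervalIntegral.integral_nonneg ht.1
      intro u hu
      rw [hf'' u hu.1]
      exact mul_nonneg (hk0 u hu.1) (hpos u ⟨hu.1, hu.2.trans ht.2⟩)
    rw [hf'0] at h1; linarith
  -- positivity near 0
  obtain ⟨δ, hδpos, hδ⟩ : ∃ δ > 0, ∀ t ∈ Icc (0:ℝ) δ, (1:ℝ)/2 ≤ deriv f t := by
    have hca := hcf'.continuousAt (x := 0)
    rw [Metric.continuousAt_iff] at hca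
    obtain ⟨δ, hδ, hd⟩ := hca (1/2) (by norm_num)
    refine ⟨δ/2, by positivity, fun t ht => ?_⟩
    have : dist t 0 < δ := by
      rw [Real.dist_eq, sub_zero, abs_of_nonneg ht.1]; linarith [ht.2]
    have := hd this
    rw [Real.dist_eq, hf'0] at this
    have := abs_lt.mp this
    linarith [this.1]
  have hpos0 : ∀ t, 0 < t → t ≤ δ → 0 < f t := by
    intro t ht htδ
    have h1 := ftc 0 t
    have h2' : ∫ u in (0:ℝ)..t, (1/2:ℝ) ≤ ∫ u in (0:ℝ)..t, deriv f u := by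
      apply intervalIntegral.integral_mono_on ht.le intervalIntegrable_const
        (hcf'.intervalIntegrable _ _)
      intro u hu; exact hδ u ⟨hu.1, hu.2.trans htδ⟩
    rw [intervalIntegral.integral_const, smul_eq_mul, sub_zero] at h2'
    rw [hf0, sub_zero] at h1
    nlinarith
  -- global positivity of f
  have hfpos : ∀ r > (0:ℝ), 0 < f r := by
    intro r hr
    by_contra hcon
    push_neg at hcon
    have hδr0 : δ < r := by
      by_contra hle
      push_neg at hle
      exact absurd (hpos0 r hr hle) (not_lt.mpr hcon)
    set Z : Set ℝ := Ici δ ∩ f ⁻¹' Iic 0 with hZ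
    have hZc : IsClosed Z := isClosed_Ici.inter (isClosed_Iic.preimage hdf.continuous)
    have hZne : Z.Nonempty := ⟨r, hδr0.le, hcon⟩
    have hbb : BddBelow Z := ⟨δ, fun x hx => hx.1⟩
    set z := sInf Z with hz
    have hzZ : z ∈ Z := hZc.csInf_mem hZne hbb
    have hz0 : 0 < z := lt_of_lt_of_le hδpos hzZ.1
    have hnnlt : ∀ t, 0 ≤ t → t < z → 0 ≤ f t := by
      intro t ht htz
      rcases eq_or_lt_of_le ht with h | h
      · rw [← h, hf0]
      rcases le_or_gt t δ with h' | h'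
      · exact (hpos0 t h h').le
      by_contra hneg
      push_neg at hneg
      have : t ∈ Z := ⟨h'.le, hneg.le⟩
      exact absurd (csInf_le hbb this) (not_le.mpr htz)
    have hfz : 0 ≤ f z := by
      have htd : Filter.Tendsto f (nhdsWithin z (Iio z)) (nhds (f z)) :=
        (hdf.continuous.tendsto z).mono_left nhdsWithin_le_nhds
      refine ge_of_tendsto htd ?_
      have h1 : ∀ᶠ t in nhdsWithin z (Iio z), 0 < t :=
        Filter.Eventually.filter_mono nhdsWithin_le_nhds (eventually_gt_nhds hz0)
      filter_upwards [self_mem_nhdsWithin, h1] with t ht ht0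
      exact hnnlt t ht0.le ht
    have hge : ∀ t ∈ Icc (0:ℝ) z, 0 ≤ f t := by
      intro t ht
      rcases eq_or_lt_of_le ht.2 with h | h
      · rw [h]; exact hfz
      · exact hnnlt t ht.1 h
    have h1le := hd1 z hz0.le hge
    have hfzz : z ≤ f z := by
      have h1 := ftc 0 z
      have h2' : ∫ u in (0:ℝ)..z, (1:ℝ) ≤ ∫ u in (0:ℝ)..z, deriv f u := by
        apply intervalIntegral.integral_mono_on hz0.le intervalIntegrable_const
          (hcf'.intervalIntegrable _ _)
        intro u hu; exact h1le u hu
      rw [intervalIntegral.integral_const, smul_eq_mul, sub_zero, mul_one] at h2'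
      rw [hf0, sub_zero] at h1
      linarith
    have : f z ≤ 0 := hzZ.2
    linarith
  have hfnn : ∀ r, 0 ≤ r → 0 ≤ f r := by
    intro r hr
    rcases eq_or_lt_of_le hr with h | h
    · rw [← h, hf0]
    · exact (hfpos r h).le
  have hd1' : ∀ r, 0 ≤ r → 1 ≤ deriv f r := by
    intro r hr
    exact hd1 r hr (fun t ht => hfnn t ht.1) r ⟨hr, le_rfl⟩
  -- f r ≥ r and f r ≤ r * f' r
  have hfge : ∀ r, 0 ≤ r → r ≤ f r := by
    intro r hr
    have h1 := ftc 0 r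
    have h2' : ∫ u in (0:ℝ)..r, (1:ℝ) ≤ ∫ u in (0:ℝ)..r, deriv f u := by
      apply intervalIntegral.integral_mono_on hr intervalIntegrable_const
        (hcf'.intervalIntegrable _ _)
      intro u hu; exact hd1' u hu.1
    rw [intervalIntegral.integral_const, smul_eq_mul, sub_zero, mul_one] at h2'
    rw [hf0, sub_zero] at h1
    linarith
  have hfle : ∀ r, 0 ≤ r → f r ≤ r * deriv f r := by
    intro r hr
    have h1 := ftc 0 r
    have h2' : ∫ u in (0:ℝ)..r, deriv f u ≤ ∫ u in (0:ℝ)..r, deriv f r := by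
      apply intervalIntegral.integral_mono_on hr (hcf'.intervalIntegrable _ _)
        intervalIntegrable_const
      intro u hu
      -- deriv f monotone on [0, r]
      have h3 := ftc' u r
      have hnn : 0 ≤ ∫ v in u..r, deriv (deriv f) v := by
        apply intervalIntegral.integral_nonneg hu.2
        intro v hv
        rw [hf'' v (hu.1.trans hv.1)]
        exact mul_nonneg (hk0 v (hu.1.trans hv.1)) (hfnn v (hu.1.trans hv.1))
      linarith
    rw [intervalIntegral.integral_const, smul_eq_mul, sub_zero] at h2'
    rw [hf0, sub_zero] at h1
    linarith
  -- Comparison function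
  set a : ℝ := 1 + ε/2 with haa
  have ha1 : 1 < a := by rw [haa]; linarith
  set R0 : ℝ := max (R+1) (Real.exp (2*a)) with hR0d
  have hRR0 : R < R0 := lt_of_lt_of_le (lt_add_one R) (le_max_left _ _)
  have h1R0 : 1 < R0 := lt_trans hR hRR0
  have hR0pos : (0:ℝ) < R0 := lt_trans one_pos h1R0
  have hlogR0 : 2*a ≤ Real.log R0 := by
    rw [Real.le_log_iff_exp_le hR0pos]
    exact le_max_right _ _
  clear_value R0
  clear_value a
  set g : ℝ → ℝ := fun x => (x + R0) * Real.log x ^ a with hgd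
  set g1 : ℝ → ℝ := fun x => Real.log x ^ a + (x + R0) * (a * Real.log x ^ (a-1) / x) with hg1d
  set g2 : ℝ → ℝ := fun x => 2*a*Real.log x ^(a-1)/x
      + (x+R0) * (a*(a-1)*Real.log x^(a-2)/x^2 - a*Real.log x^(a-1)/x^2) with hg2d
  clear_value g2
  clear_value g1
  clear_value g
  -- derivatives
  have hderivg : ∀ x, 1 < x → HasDerivAt g (g1 x) x := by
    intro r hr
    have hr0 : (0:ℝ) < r := lt_trans one_pos hr
    have hlr : 0 < Real.log r := Real.log_pos hr
    have hL : HasDerivAt (fun x => Real.log x ^ a) (r⁻¹ * a * Real.log r ^ (a-1)) r :=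
      (Real.hasDerivAt_log hr0.ne').rpow_const (Or.inl hlr.ne')
    have h := ((hasDerivAt_id' (x := r)).add_const R0).mul hL
    rw [hgd, hg1d]
    refine h.congr_deriv ?_
    field_simp
  have hderivg1 : ∀ x, 1 < x → HasDerivAt g1 (g2 x) x := by
    intro r hr
    have hr0 : (0:ℝ) < r := lt_trans one_pos hr
    have hlr : 0 < Real.log r := Real.log_pos hr
    have hL : HasDerivAt (fun x => Real.log x ^ a) (r⁻¹ * a * Real.log r ^ (a-1)) r :=
      (Real.hasDerivAt_log hr0.ne').rpow_const (Or.inl hlr.ne')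
    have hL1 : HasDerivAt (fun x => Real.log x ^ (a-1)) (r⁻¹ * (a-1) * Real.log r ^ (a-1-1)) r :=
      (Real.hasDerivAt_log hr0.ne').rpow_const (Or.inl hlr.ne')
    have hq := (hL1.const_mul a).div (hasDerivAt_id' (x := r)) hr0.ne'
    have h := hL.add (((hasDerivAt_id' (x := r)).add_const R0).mul hq)
    rw [hg1d, hg2d]
    refine h.congr_deriv ?_
    have e2 : a - 2 = a - 1 - 1 := by ring
    rw [e2]
    simp only [Pi.div_apply]
    field_simp
    ring
  -- positivity of g
  have hgpos : ∀ x, 1 < x → 0 < g x := by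
    intro x hx
    rw [hgd]
    have : 0 < Real.log x := Real.log_pos hx
    have : (0:ℝ) < x + R0 := by linarith [lt_trans one_pos hx]
    positivity
  have hg1nn : ∀ x, 1 < x → 0 ≤ g1 x := by
    intro x hx
    rw [hg1d]
    have h1 : 0 < Real.log x := Real.log_pos hx
    have h2 : (0:ℝ) < x := lt_trans one_pos hx
    have h3 : (0:ℝ) < x + R0 := by linarith
    have h4 : (0:ℝ) < a := by linarith
    positivity
  -- key curvature inequality
  have hkey : ∀ r, R0 ≤ r → g2 r ≤ (1+ε)/(r^2 * Real.log r) * g r := by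
    intro r hrr
    have hr : 1 < r := lt_of_lt_of_le h1R0 hrr
    have hr0 : (0:ℝ) < r := lt_trans one_pos hr
    have hlr : 0 < Real.log r := Real.log_pos hr
    have hL : 1 + ε/2 ≤ Real.log r := by
      have := Real.log_le_log hR0pos hrr
      rw [haa] at hlogR0; linarith
    rw [hgd, hg2d]
    set L := Real.log r with hLL
    set P := L ^ a with hPP
    have hP : 0 < P := Real.rpow_pos_of_pos hlr a
    have e1 : L ^ (a-1) = P / L := by rw [hPP, Real.rpow_sub hlr, Real.rpow_one]
    have e2 : L ^ (a-2) = P / L / L := by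
      rw [show a - 2 = a - 1 - 1 by ring, Real.rpow_sub hlr, Real.rpow_sub hlr, Real.rpow_one]
    beta_reduce
    rw [e1, e2]
    have key : a*L*(r - R0) + a*(a-1)*(r+R0) ≤ (1+ε)*L*(r+R0) := by
      have hL' : 1 + ε/2 ≤ L := hL
      have hnn : (0:ℝ) ≤ (ε/2)*r + (2+3*(ε/2))*R0 :=
        add_nonneg (mul_nonneg (by linarith) hr0.le) (mul_nonneg (by linarith) hR0pos.le)
      rw [haa]
      nlinarith [mul_le_mul_of_nonneg_right hL' hnn, mul_pos hε hR0pos,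
        mul_nonneg hε.le hR0pos.le]
    have eL : 2*a*(P/L)/r + (r+R0) * (a*(a-1)*(P/L/L)/r^2 - a*(P/L)/r^2)
        = (a*L*(r - R0) + a*(a-1)*(r+R0)) * (P/(r^2*L^2)) := by
      field_simp; ring
    have eR : (1+ε)/(r^2*L) * ((r+R0)*P) = ((1+ε)*L*(r+R0)) * (P/(r^2*L^2)) := by
      field_simp
    rw [eL, eR]
    exact mul_le_mul_of_nonneg_right key (by positivity)
  -- continuity of the auxiliary functions
  have hsubI : ∀ {u : ℝ}, u ∈ Ici R0 → (1:ℝ) < u := fun hu => lt_of_lt_of_le h1R0 hu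
  have hclog : ContinuousOn Real.log (Ici R0) :=
    Real.continuousOn_log.mono (fun x hx => by
      simp only [mem_compl_iff, mem_singleton_iff]
      have := hsubI hx
      positivity)
  have hcpow : ∀ c : ℝ, ContinuousOn (fun x => Real.log x ^ c) (Ici R0) := fun c =>
    hclog.rpow_const (fun x hx => Or.inl (Real.log_pos (hsubI hx)).ne')
  have hcid : ContinuousOn (fun x : ℝ => x) (Ici R0) := continuousOn_id
  have hne0 : ∀ x ∈ Ici R0, x ≠ 0 := fun x hx => by
    have := hsubI hx; positivity
  have hcg : ContinuousOn g (Ici R0) := by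
    rw [hgd]; exact (hcid.add continuousOn_const).mul (hcpow a)
  have hcg1 : ContinuousOn g1 (Ici R0) := by
    rw [hg1d]
    exact (hcpow a).add ((hcid.add continuousOn_const).mul
      (((hcpow (a-1)).const_smul a).div hcid hne0))
  have hcg2 : ContinuousOn g2 (Ici R0) := by
    rw [hg2d]
    refine ContinuousOn.add ?_ ?_
    · exact ((hcpow (a-1)).const_smul (2*a)).div hcid hne0
    · refine (hcid.add continuousOn_const).mul (ContinuousOn.sub ?_ ?_)
      · exact ((hcpow (a-2)).const_smul (a*(a-1))).div (hcid.pow 2)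
          (fun x hx => pow_ne_zero 2 (hne0 x hx))
      · exact ((hcpow (a-1)).const_smul a).div (hcid.pow 2)
          (fun x hx => pow_ne_zero 2 (hne0 x hx))
  -- the Wronskian
  set W : ℝ → ℝ := fun x => deriv f x * g x - f x * g1 x with hWd
  clear_value W
  have hW' : ∀ x, 1 < x → HasDerivAt W (deriv (deriv f) x * g x - f x * g2 x) x := by
    intro x hx
    have h1 := ((hdf' x).hasDerivAt).mul (hderivg x hx)
    have h2 := ((hdf x).hasDerivAt).mul (hderivg1 x hx)
    have h := h1.sub h2
    rw [hWd]
    refine h.congr_deriv ?_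
    ring
  -- W(R0) ≥ 0
  have hW0 : 0 ≤ W R0 := by
    have hlr : 0 < Real.log R0 := Real.log_pos h1R0
    set L0 := Real.log R0 with hL0d
    set P0 := L0 ^ a with hP0d
    have hP0 : 0 < P0 := Real.rpow_pos_of_pos hlr a
    have e1 : L0 ^ (a-1) = P0 / L0 := by rw [hP0d, Real.rpow_sub hlr, Real.rpow_one]
    clear_value P0
    clear_value L0
    have hslope : R0 * g1 R0 ≤ g R0 := by
      rw [hgd, hg1d]
      beta_reduce
      rw [← hL0d, ← hP0d, e1]
      have eA : R0 * (P0 + (R0+R0) * (a * (P0/L0) / R0)) = (R0*L0 + 2*a*R0) * (P0/L0) := by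
        field_simp; ring
      have eB : (R0+R0) * P0 = (2*R0*L0) * (P0/L0) := by field_simp; ring
      rw [eA, eB]
      apply mul_le_mul_of_nonneg_right _ (by positivity)
      nlinarith [mul_le_mul_of_nonneg_right hlogR0 hR0pos.le]
    have hfle0 := hfle R0 hR0pos.le
    have hd1R0 := hd1' R0 hR0pos.le
    have hg1R0 := hg1nn R0 h1R0
    rw [hWd]
    beta_reduce
    nlinarith [mul_le_mul_of_nonneg_right hfle0 hg1R0,
      mul_le_mul_of_nonneg_left hslope (by linarith : (0:ℝ) ≤ deriv f R0)]
  -- W ≥ 0 on [R0, ∞)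
  have hWnn : ∀ r, R0 ≤ r → 0 ≤ W r := by
    intro r hrr
    have husub : uIcc R0 r ⊆ Ici R0 := by
      rw [uIcc_of_le hrr]; exact Icc_subset_Ici_self
    have heq : ∫ u in R0..r, (deriv (deriv f) u * g u - f u * g2 u) = W r - W R0 := by
      apply intervalIntegral.integral_eq_sub_of_hasDerivAt
      · intro x hx
        exact hW' x (hsubI (husub hx))
      · apply ContinuousOn.intervalIntegrable
        apply ContinuousOn.mono _ husub
        exact (hcf''.continuousOn.mul hcg).sub (hdf.continuous.continuousOn.mul hcg2)
    have hnn : 0 ≤ ∫ u in R0..r, (deriv (deriv f) u * g u - f u * g2 u) := by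
      apply intervalIntegral.integral_nonneg hrr
      intro u hu
      have hu1 : 1 < u := lt_of_lt_of_le h1R0 hu.1
      have hu0 : (0:ℝ) ≤ u := by linarith
      rw [hf'' u hu0]
      have hfu := hfnn u hu0
      have hgu := (hgpos u hu1).le
      have hkeyu := hkey u hu.1
      have hku := hklow u (lt_of_lt_of_le hRR0 hu.1)
      nlinarith [mul_le_mul_of_nonneg_left hkeyu hfu,
        mul_le_mul_of_nonneg_right hku (mul_nonneg hfu hgu)]
    linarith
  -- ratio monotonicity
  have hratio : ∀ r, R0 ≤ r → f R0 / g R0 * g r ≤ f r := by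
    intro r hrr
    have hgR0 := hgpos R0 h1R0
    have hgr := hgpos r (lt_of_lt_of_le h1R0 hrr)
    have husub : uIcc R0 r ⊆ Ici R0 := by
      rw [uIcc_of_le hrr]; exact Icc_subset_Ici_self
    have heq : ∫ u in R0..r, (W u / g u ^ 2)
        = f r / g r - f R0 / g R0 := by
      apply intervalIntegral.integral_eq_sub_of_hasDerivAt (f := fun x => f x / g x)
      · intro x hx
        have hx1 : 1 < x := hsubI (husub hx)
        have := ((hdf x).hasDerivAt).div (hderivg x hx1) (hgpos x hx1).ne'
        rw [hWd]
        exact this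
      · apply ContinuousOn.intervalIntegrable
        apply ContinuousOn.mono _ husub
        refine ContinuousOn.div ?_ (hcg.pow 2) ?_
        · rw [hWd]
          exact (hcf'.continuousOn.mul hcg).sub (hdf.continuous.continuousOn.mul hcg1)
        · intro x hx
          exact pow_ne_zero 2 (hgpos x (hsubI hx)).ne'
    have hnn : 0 ≤ ∫ u in R0..r, (W u / g u ^ 2) := by
      apply intervalIntegral.integral_nonneg hrr
      intro u hu
      exact div_nonneg (hWnn u hu.1) (by positivity)
    have hle : f R0 / g R0 ≤ f r / g r := by linarith
    rw [div_mul_eq_mul_div, div_le_iff₀ hgR0]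
    rw [div_le_div_iff₀ hgR0 hgr] at hle
    linarith
  -- majorant integrability
  have hane : a - 1 ≠ 0 := sub_ne_zero.mpr (ne_of_gt ha1)
  have hmaj0 : IntegrableOn (fun r => Real.log r ^ (-a) / r) (Ioi R0) volume := by
    set G : ℝ → ℝ := fun r => -(a-1)⁻¹ * Real.log r ^ (1-a) with hGd
    have hderivG : ∀ x ∈ Ioi R0, HasDerivAt G (Real.log x ^ (-a) / x) x := by
      intro x hx
      have hx1 : 1 < x := lt_trans h1R0 hx
      have hx0 : (0:ℝ) < x := lt_trans one_pos hx1
      have hlx : 0 < Real.log x := Real.log_pos hx1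
      have hd1G : HasDerivAt (fun y => Real.log y ^ (1-a)) (x⁻¹ * (1-a) * Real.log x ^ (1-a-1)) x :=
        (Real.hasDerivAt_log hx0.ne').rpow_const (Or.inl hlx.ne')
      have h2G := hd1G.const_mul (-(a-1)⁻¹)
      refine h2G.congr_deriv ?_
      rw [show (1:ℝ)-a-1 = -a by ring]
      field_simp
      ring
    have hcontG : ContinuousWithinAt G (Ici R0) R0 := by
      have hcG : ContinuousOn G (Ici R0) :=
        continuousOn_const.mul ((hclog.rpow_const (fun x hx =>
          Or.inl (Real.log_pos (hsubI hx)).ne')))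
      exact hcG.continuousWithinAt (mem_Ici.mpr le_rfl)
    have htendG : Filter.Tendsto G Filter.atTop (nhds 0) := by
      have h1' : Filter.Tendsto (fun r : ℝ => Real.log r ^ (1-a)) Filter.atTop (nhds 0) := by
        have := (tendsto_rpow_neg_atTop (by linarith : (0:ℝ) < a - 1)).comp
          Real.tendsto_log_atTop
        simpa [Function.comp_def, show -(a-1) = 1-a by ring] using this
      have h2' := h1'.const_mul (-(a-1)⁻¹)
      rw [mul_zero] at h2'
      exact h2'
    have hnnG : ∀ x ∈ Ioi R0, 0 ≤ Real.log x ^ (-a) / x := by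
      intro x hx
      have hx1 : 1 < x := lt_trans h1R0 hx
      exact div_nonneg (Real.rpow_nonneg (Real.log_nonneg hx1.le) _) (by linarith)
    exact integrableOn_Ioi_deriv_of_nonneg hcontG hderivG hnnG htendG
  -- the constant
  have hfR0pos : 0 < f R0 := hfpos R0 hR0pos
  have hgR0pos : 0 < g R0 := hgpos R0 h1R0
  set c : ℝ := f R0 / g R0 with hcd
  have hcpos : 0 < c := div_pos hfR0pos hgR0pos
  -- integrability on (R0, ∞)
  have hint2 : IntegrableOn (fun r => 1 / f r) (Ioi R0) volume := by
    have hmaj : IntegrableOn (fun r => c⁻¹ * (Real.log r ^ (-a) / r)) (Ioi R0) volume :=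
      hmaj0.const_mul _
    apply Integrable.mono' hmaj
    · apply ContinuousOn.aestronglyMeasurable _ measurableSet_Ioi
      apply continuousOn_const.div hdf.continuous.continuousOn
      intro x hx
      exact (hfpos x (lt_trans hR0pos hx)).ne'
    · rw [ae_restrict_iff' measurableSet_Ioi]
      filter_upwards with r hr
      have hrr : R0 ≤ r := (le_of_lt hr)
      have hr1 : 1 < r := lt_of_lt_of_le h1R0 hrr
      have hr0 : (0:ℝ) < r := lt_trans one_pos hr1
      have hlr : 0 < Real.log r := Real.log_pos hr1
      have hfr : 0 < f r := hfpos r hr0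
      have hglow : r * Real.log r ^ a ≤ g r := by
        rw [hgd]
        beta_reduce
        have hPn : 0 ≤ Real.log r ^ a := Real.rpow_nonneg hlr.le a
        nlinarith [mul_nonneg hR0pos.le hPn]
      have hchain : c * (r * Real.log r ^ a) ≤ f r := by
        calc c * (r * Real.log r ^ a) ≤ c * g r :=
              mul_le_mul_of_nonneg_left hglow hcpos.le
          _ ≤ f r := hratio r hrr
      have hposmid : 0 < r * Real.log r ^ a := by positivity
      rw [Real.norm_eq_abs, abs_of_pos (by positivity : (0:ℝ) < 1 / f r)]
      have h1' : 1 / f r ≤ 1 / (c * (r * Real.log r ^ a)) :=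
        one_div_le_one_div_of_le (by positivity) hchain
      have h2' : 1 / (c * (r * Real.log r ^ a)) = c⁻¹ * (Real.log r ^ (-a) / r) := by
        rw [Real.rpow_neg hlr.le]
        field_simp
      linarith [h1', h2'.le]
  -- integrability on (1, R0]
  have hint1 : IntegrableOn (fun r => 1 / f r) (Ioc 1 R0) volume := by
    have hcont : ContinuousOn (fun r => 1 / f r) (Icc 1 R0) := by
      apply continuousOn_const.div hdf.continuous.continuousOn
      intro x hx
      exact (hfpos x (lt_of_lt_of_le one_pos hx.1)).ne'
    exact (hcont.integrableOn_compact isCompact_Icc).mono_set Ioc_subset_Icc_self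
  -- combine
  have := hint1.union hint2
  rwa [Ioc_union_Ioi_eq_Ioi h1R0.le] at this
end

section
/- Let R > 1 and Λ ≥ 0. Let k : ℝ → ℝ be continuous with 0 ≤ k(r) ≤ Λ for r ∈ [0,R] and 0 ≤ k(r) ≤ 1/(r² log r) for all r > R, and let f : ℝ → ℝ be twice continuously differentiable with f''(r) = k(r) f(r) for r ≥ 0, f(0) = 0 and f'(0) = 1. Then there exists a constant C > 0 such that f(r) ≤ C r log r for all r ≥ max(R, e). -/
open Real

lemma jacobi_ge_id (k f : ℝ → ℝ)
    (hk0 : ∀ r ≥ (0:ℝ), 0 ≤ k r)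
    (hf : ContDiff ℝ 2 f)
    (hf'' : ∀ r ≥ (0:ℝ), deriv (deriv f) r = k r * f r)
    (hf0 : f 0 = 0) (hf'0 : deriv f 0 = 1)
    (T : ℝ) (hT : 0 ≤ T) (hpos : ∀ s ∈ Set.Ico (0:ℝ) T, 0 ≤ f s) :
    T ≤ f T := by
  have hfd : Differentiable ℝ f := hf.differentiable two_ne_zero
  have hf1 : ContDiff ℝ 1 (deriv f) :=
    (contDiff_succ_iff_deriv.mp (by exact_mod_cast hf : ContDiff ℝ (1+1) f)).2.2
  have hf'd : Differentiable ℝ (deriv f) := hf1.differentiable one_ne_zero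
  have mono1 : MonotoneOn (deriv f) (Set.Icc 0 T) := by
    apply monotoneOn_of_deriv_nonneg (convex_Icc 0 T) hf1.continuous.continuousOn
      hf'd.differentiableOn
    intro x hx
    rw [interior_Icc] at hx
    rw [hf'' x hx.1.le]
    exact mul_nonneg (hk0 x hx.1.le) (hpos x ⟨hx.1.le, hx.2⟩)
  have h1 : ∀ s ∈ Set.Icc (0:ℝ) T, 1 ≤ deriv f s := fun s hs => by
    have := mono1 (Set.left_mem_Icc.mpr hT) hs hs.1
    rwa [hf'0] at this
  have mono2 : MonotoneOn (fun s => f s - s) (Set.Icc 0 T) := by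
    apply monotoneOn_of_deriv_nonneg (convex_Icc 0 T)
      (hfd.continuous.sub continuous_id).continuousOn
      ((hfd.sub differentiable_id).differentiableOn)
    intro x hx
    rw [interior_Icc] at hx
    rw [deriv_sub (hfd x) differentiableAt_id, deriv_id]
    have := h1 x ⟨hx.1.le, hx.2.le⟩
    linarith
  have := mono2 (Set.left_mem_Icc.mpr hT) (Set.right_mem_Icc.mpr hT) hT
  simp only [hf0] at this
  linarith

lemma jacobi_nonneg (k f : ℝ → ℝ)
    (hk0 : ∀ r ≥ (0:ℝ), 0 ≤ k r)
    (hf : ContDiff ℝ 2 f)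
    (hf'' : ∀ r ≥ (0:ℝ), deriv (deriv f) r = k r * f r)
    (hf0 : f 0 = 0) (hf'0 : deriv f 0 = 1) :
    ∀ t ≥ (0:ℝ), t ≤ f t := by
  intro t ht
  by_cases hpos : ∀ s ∈ Set.Ico (0:ℝ) t, 0 ≤ f s
  · exact jacobi_ge_id k f hk0 hf hf'' hf0 hf'0 t ht hpos
  exfalso
  push_neg at hpos
  obtain ⟨s0, hs0, hs0neg⟩ := hpos
  -- find δ > 0 with deriv f > 0 on ball
  have hf1 : ContDiff ℝ 1 (deriv f) :=
    (contDiff_succ_iff_deriv.mp (by exact_mod_cast hf : ContDiff ℝ (1+1) f)).2.2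
  have hopen : IsOpen {x : ℝ | 0 < deriv f x} := isOpen_lt continuous_const hf1.continuous
  have h0mem : (0:ℝ) ∈ {x : ℝ | 0 < deriv f x} := by simp [hf'0]
  obtain ⟨ε, hε, hball⟩ := Metric.isOpen_iff.mp hopen 0 h0mem
  set δ := ε / 2 with hδdef
  have hδ : 0 < δ := by positivity
  have hδsub : Set.Icc (0:ℝ) δ ⊆ {x : ℝ | 0 < deriv f x} := by
    intro x hx
    apply hball
    rw [Metric.mem_ball, Real.dist_eq, sub_zero, abs_of_nonneg hx.1]
    linarith [hx.2]
  have hsm : StrictMonoOn f (Set.Icc 0 δ) := by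
    apply strictMonoOn_of_deriv_pos (convex_Icc 0 δ) (hf.continuous.continuousOn)
    intro x hx
    exact hδsub (interior_subset hx)
  have hfδ : ∀ s ∈ Set.Icc (0:ℝ) δ, 0 ≤ f s := by
    intro s hs
    rcases eq_or_lt_of_le hs.1 with h | h
    · rw [← h, hf0]
    · have := hsm (Set.left_mem_Icc.mpr hδ.le) hs h
      rw [hf0] at this; linarith
  have hs0δ : δ < s0 := by
    by_contra h
    push_neg at h
    exact absurd (hfδ s0 ⟨hs0.1, h⟩) (not_le.mpr hs0neg)
  -- N and its infimum
  set N := {s : ℝ | s ∈ Set.Icc δ t ∧ f s ≤ 0} with hN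
  have hNclosed : IsClosed N := by
    have : N = Set.Icc δ t ∩ f ⁻¹' Set.Iic 0 := by ext x; simp [hN, Set.mem_Icc, and_comm]
    rw [this]
    exact isClosed_Icc.inter (isClosed_Iic.preimage hf.continuous)
  have hNne : N.Nonempty := ⟨s0, ⟨hs0δ.le, hs0.2.le⟩, hs0neg.le⟩
  have hNbdd : BddBelow N := ⟨δ, fun x hx => hx.1.1⟩
  set T := sInf N with hTdef
  have hTmem : T ∈ N := hNclosed.csInf_mem hNne hNbdd
  have hTδ : δ ≤ T := hTmem.1.1
  have hprefix : ∀ s ∈ Set.Ico (0:ℝ) T, 0 ≤ f s := by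
    intro s hs
    rcases le_or_gt s δ with h | h
    · exact hfδ s ⟨hs.1, h⟩
    · by_contra hneg
      push_neg at hneg
      have : s ∈ N := ⟨⟨h.le, hs.2.le.trans hTmem.1.2⟩, hneg.le⟩
      exact absurd (csInf_le hNbdd this) (not_le.mpr hs.2)
  have := jacobi_ge_id k f hk0 hf hf'' hf0 hf'0 T (hδ.le.trans hTδ) hprefix
  have := hTmem.2
  linarith

/-- Upper growth bound: if 0 ≤ k ≤ Λ on [0,R] and 0 ≤ k(r) ≤ 1/(r² log r) for r > R,
then the Jacobi field f with potential k satisfies f(r) ≤ C r log r for r ≥ max(R, e). -/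
theorem stmt_7 (R Λ : ℝ) (hR : 1 < R) (hΛ : 0 ≤ Λ) (k f : ℝ → ℝ)
    (hk : Continuous k)
    (hk1 : ∀ r ∈ Set.Icc (0 : ℝ) R, 0 ≤ k r ∧ k r ≤ Λ)
    (hk2 : ∀ r > R, 0 ≤ k r ∧ k r ≤ 1 / (r ^ 2 * Real.log r))
    (hf : ContDiff ℝ 2 f)
    (hf'' : ∀ r ≥ 0, deriv (deriv f) r = k r * f r)
    (hf0 : f 0 = 0) (hf'0 : deriv f 0 = 1) :
    ∃ C > (0 : ℝ), ∀ r ≥ max R (Real.exp 1), f r ≤ C * r * Real.log r := by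
  have hk0 : ∀ r ≥ (0:ℝ), 0 ≤ k r := by
    intro r hr
    rcases le_or_gt r R with h | h
    · exact (hk1 r ⟨hr, h⟩).1
    · exact (hk2 r h).1
  have hfpos : ∀ t ≥ (0:ℝ), 0 ≤ f t := fun t ht =>
    le_trans ht (jacobi_nonneg k f hk0 hf hf'' hf0 hf'0 t ht)
  have hfd : Differentiable ℝ f := hf.differentiable two_ne_zero
  have hf1 : ContDiff ℝ 1 (deriv f) :=
    (contDiff_succ_iff_deriv.mp (by exact_mod_cast hf : ContDiff ℝ (1+1) f)).2.2
  have hf'd : Differentiable ℝ (deriv f) := hf1.differentiable one_ne_zero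
  set r0 := max R (Real.exp 1) with hr0def
  have hr0R : R ≤ r0 := le_max_left _ _
  have hr0e : Real.exp 1 ≤ r0 := le_max_right _ _
  have he1 : (1:ℝ) < Real.exp 1 := by
    have := Real.exp_one_gt_d9; linarith
  have hr01 : 1 < r0 := lt_of_lt_of_le he1 hr0e
  have hr0pos : 0 < r0 := lt_trans one_pos hr01
  have hlog : ∀ x : ℝ, r0 ≤ x → 1 ≤ Real.log x := by
    intro x hx
    calc (1:ℝ) = Real.log (Real.exp 1) := (Real.log_exp 1).symm
    _ ≤ Real.log x := Real.log_le_log (Real.exp_pos 1) (hr0e.trans hx)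
  have hgpos : ∀ x : ℝ, r0 ≤ x → x ≤ x * Real.log x := by
    intro x hx
    nlinarith [hlog x hx, hr0pos.trans_le hx]
  have hg : ∀ x : ℝ, 0 < x → HasDerivAt (fun r => r * Real.log r) (Real.log x + 1) x := by
    intro x hx
    have h := (hasDerivAt_id x).mul (Real.hasDerivAt_log hx.ne')
    refine h.congr_deriv ?_
    simp [hx.ne']
  set W : ℝ → ℝ := fun r => deriv f r * (r * Real.log r) - f r * (Real.log r + 1) with hWdef
  have hW : ∀ x : ℝ, 0 < x →
      HasDerivAt W (k x * f x * (x * Real.log x) - f x * x⁻¹) x := by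
    intro x hx
    have h1 : HasDerivAt (deriv f) (k x * f x) x := by
      have := (hf'd x).hasDerivAt
      rwa [hf'' x hx.le] at this
    have h2 : HasDerivAt (fun r => Real.log r + 1) x⁻¹ x :=
      (Real.hasDerivAt_log hx.ne').add_const 1
    have h := (h1.mul (hg x hx)).sub (((hfd x).hasDerivAt).mul h2)
    refine h.congr_deriv ?_
    ring
  -- continuity of W on Ici r0
  have hlogC : ContinuousOn Real.log (Set.Ici r0) :=
    Real.continuousOn_log.mono (fun x hx => by
      simp only [Set.mem_compl_iff, Set.mem_singleton_iff]
      exact ne_of_gt (hr0pos.trans_le hx))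
  have hWc : ContinuousOn W (Set.Ici r0) := by
    apply ContinuousOn.sub
    · exact hf1.continuous.continuousOn.mul (continuousOn_id.mul hlogC)
    · exact hfd.continuous.continuousOn.mul (hlogC.add continuousOn_const)
  have hWanti : AntitoneOn W (Set.Ici r0) := by
    apply antitoneOn_of_deriv_nonpos (convex_Ici r0) hWc
    · intro x hx
      rw [interior_Ici] at hx
      exact (hW x (hr0pos.trans hx)).differentiableAt.differentiableWithinAt
    · intro x hx
      rw [interior_Ici] at hx
      have hxpos : 0 < x := hr0pos.trans hx
      rw [(hW x hxpos).deriv]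
      have hxR : R < x := lt_of_le_of_lt hr0R hx
      have hkx := (hk2 x hxR).2
      have hfx := hfpos x hxpos.le
      have hlx : 1 ≤ Real.log x := hlog x hx.le
      have key : k x * (x * Real.log x) ≤ x⁻¹ := by
        have h1 : k x * (x * Real.log x) ≤ (1 / (x ^ 2 * Real.log x)) * (x * Real.log x) := by
          apply mul_le_mul_of_nonneg_right hkx
          positivity
        have h2 : (1 / (x ^ 2 * Real.log x)) * (x * Real.log x) = x⁻¹ := by
          field_simp
        linarith [h1, h2.le, h2.ge]
      nlinarith [mul_le_mul_of_nonneg_left key hfx]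
  -- the quotient function
  set B := |W r0| + 1 with hBdef
  have hBpos : 0 < B := by positivity
  have hWB : ∀ r ∈ Set.Ici r0, W r ≤ B := by
    intro r hr
    have := hWanti (Set.self_mem_Ici) hr hr
    have := le_abs_self (W r0)
    linarith
  set χ : ℝ → ℝ := fun r => f r / (r * Real.log r) + B / r with hχdef
  have hχd : ∀ x : ℝ, r0 ≤ x →
      HasDerivAt χ (W x / (x * Real.log x) ^ 2 - B / x ^ 2) x := by
    intro x hx
    have hxpos : 0 < x := hr0pos.trans_le hx
    have hgne : x * Real.log x ≠ 0 := by
      have := hgpos x hx; nlinarith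
    have h1 : HasDerivAt (fun r => f r / (r * Real.log r))
        ((deriv f x * (x * Real.log x) - f x * (Real.log x + 1)) / (x * Real.log x) ^ 2) x :=
      ((hfd x).hasDerivAt).div (hg x hxpos) hgne
    have h2 : HasDerivAt (fun r : ℝ => B / r) ((0 * x - B * 1) / x ^ 2) x :=
      (hasDerivAt_const x B).div (hasDerivAt_id x) hxpos.ne'
    have h := h1.add h2
    refine h.congr_deriv ?_
    rw [hWdef]
    ring
  have hχc : ContinuousOn χ (Set.Ici r0) := by
    intro x hx
    exact ((hχd x hx).differentiableAt.continuousAt).continuousWithinAt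
  have hχanti : AntitoneOn χ (Set.Ici r0) := by
    apply antitoneOn_of_deriv_nonpos (convex_Ici r0) hχc
    · intro x hx
      rw [interior_Ici] at hx
      exact (hχd x hx.le).differentiableAt.differentiableWithinAt
    · intro x hx
      rw [interior_Ici] at hx
      have hxpos : 0 < x := hr0pos.trans hx
      rw [(hχd x hx.le).deriv]
      have hgx : x ≤ x * Real.log x := hgpos x hx.le
      have hWx := hWB x (Set.mem_Ici.mpr hx.le)
      have h1 : W x / (x * Real.log x) ^ 2 ≤ B / x ^ 2 := by
        calc W x / (x * Real.log x) ^ 2 ≤ B / (x * Real.log x) ^ 2 :=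
              div_le_div_of_nonneg_right hWx (by positivity)
          _ ≤ B / x ^ 2 := by
              apply div_le_div_of_nonneg_left hBpos.le (by positivity)
              nlinarith [pow_le_pow_left₀ hxpos.le hgx 2]
      linarith
  set C := f r0 / (r0 * Real.log r0) + B / r0 with hCdef
  have hgr0 : 0 < r0 * Real.log r0 := lt_of_lt_of_le hr0pos (hgpos r0 le_rfl)
  have hCpos : 0 < C := by
    have h1 := hfpos r0 hr0pos.le
    have h2 : 0 < B / r0 := by positivity
    have h3 : 0 ≤ f r0 / (r0 * Real.log r0) := by positivity
    rw [hCdef]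
    linarith
  refine ⟨C, hCpos, fun r hr => ?_⟩
  have hrr0 : r0 ≤ r := hr
  have hrpos : 0 < r := hr0pos.trans_le hrr0
  have hgr : 0 < r * Real.log r := lt_of_lt_of_le hrpos (hgpos r hrr0)
  have hχle : χ r ≤ χ r0 := hχanti Set.self_mem_Ici hrr0 hrr0
  have hBr : 0 < B / r := by positivity
  have : f r / (r * Real.log r) ≤ C := by
    simp only [hχdef, hCdef] at hχle ⊢
    linarith
  calc f r = f r / (r * Real.log r) * (r * Real.log r) := by rw [div_mul_cancel₀ _ hgr.ne']
    _ ≤ C * (r * Real.log r) := mul_le_mul_of_nonneg_right this hgr.le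
    _ = C * r * Real.log r := by ring
end

section
/- Let R > 1 and Λ ≥ 0. Let k : ℝ → ℝ be continuous with 0 ≤ k(r) ≤ Λ for r ∈ [0,R] and 0 ≤ k(r) ≤ 1/(r² log r) for all r > R, and let f : ℝ → ℝ be twice continuously differentiable with f''(r) = k(r) f(r) for r ≥ 0, f(0) = 0 and f'(0) = 1. Then f > 0 on (0,∞) and the improper integral ∫_e^∞ 1/f(r) dr diverges (equals +∞). -/
open Real MeasureTheory Set

/-- If `g` has derivative `g' ≥ c` on `[a,r]`, then `g r ≥ g a + (r-a)c`. -/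
lemma lin_lower (g g' : ℝ → ℝ) (a r c : ℝ) (har : a ≤ r)
    (hg' : ∀ x ∈ Icc a r, HasDerivAt g (g' x) x)
    (hge : ∀ x ∈ Icc a r, c ≤ g' x) :
    g a + (r - a) * c ≤ g r := by
  set h : ℝ → ℝ := fun x => g x - c * x with hh
  have hd : ∀ x ∈ Icc a r, HasDerivAt h (g' x - c) x := fun x hx =>
    ((hg' x hx).sub ((hasDerivAt_id x).const_mul c)).congr_deriv (by ring)
  have hmono : MonotoneOn h (Icc a r) := by
    refine monotoneOn_of_deriv_nonneg (convex_Icc a r)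
      (fun x hx => ((hd x hx).continuousAt).continuousWithinAt)
      (fun x hx => ((hd x (interior_subset hx)).differentiableAt).differentiableWithinAt) ?_
    intro x hx
    rw [(hd x (interior_subset hx)).deriv]
    have := hge x (interior_subset hx)
    linarith
  have := hmono (left_mem_Icc.2 har) (right_mem_Icc.2 har) har
  simp only [hh] at this
  nlinarith

/-- Persistence: if `g(a) ≥ 0`, `g'(a) > 0`, and `g'' ≥ 0` wherever `g ≥ 0` (for `r ≥ a`),
then `g' ≥ g'(a)` and `g r ≥ g a + (r-a) g'(a)` for all `r ≥ a`. -/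
lemma persist (g g' g'' : ℝ → ℝ) (a : ℝ)
    (hg' : ∀ r, a ≤ r → HasDerivAt g (g' r) r)
    (hg'' : ∀ r, a ≤ r → HasDerivAt g' (g'' r) r)
    (h0 : 0 ≤ g a) (h1 : 0 < g' a)
    (hpos : ∀ r, a ≤ r → 0 ≤ g r → 0 ≤ g'' r) :
    ∀ r, a ≤ r → g' a ≤ g' r ∧ g a + (r - a) * g' a ≤ g r := by
  have key : ∀ r, a ≤ r → g' a ≤ g' r := by
    by_contra hB
    push_neg at hB
    set B : Set ℝ := {r | a ≤ r ∧ g' r < g' a} with hBdef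
    have hBne : B.Nonempty := by
      obtain ⟨r, hr1, hr2⟩ := hB
      exact ⟨r, hr1, hr2⟩
    have hBbd : BddBelow B := ⟨a, fun b hb => hb.1⟩
    set t := sInf B with htdef
    have hat : a ≤ t := le_csInf hBne fun b hb => hb.1
    have hIco : ∀ s, a ≤ s → s < t → g' a ≤ g' s := by
      intro s hs hst
      by_contra hlt
      push_neg at hlt
      exact absurd (csInf_le hBbd ⟨hs, hlt⟩) (not_le.2 hst)
    have ht' : g' a ≤ g' t := by
      rcases eq_or_lt_of_le hat with h | h
      · rw [← h]
      · have hcont : ContinuousAt g' t := (hg'' t hat).continuousAt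
        have htend : Filter.Tendsto g' (nhdsWithin t (Iio t)) (nhds (g' t)) :=
          hcont.continuousWithinAt.tendsto
        refine ge_of_tendsto htend ?_
        filter_upwards [Ioo_mem_nhdsLT_of_mem (⟨h, le_refl t⟩ : t ∈ Ioc a t)] with s hs
        exact hIco s hs.1.le hs.2
    have hIcc : ∀ s, s ∈ Icc a t → g' a ≤ g' s := by
      intro s ⟨hs1, hs2⟩
      rcases eq_or_lt_of_le hs2 with h | h
      · rw [h]; exact ht'
      · exact hIco s hs1 h
    -- g ≥ g a + (s-a) g' a on [a,t]
    have hglow : ∀ s, s ∈ Icc a t → g a + (s - a) * g' a ≤ g s := by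
      intro s hs
      exact lin_lower g g' a s (g' a) hs.1
        (fun x hx => hg' x hx.1)
        (fun x hx => hIcc x ⟨hx.1, hx.2.trans hs.2⟩)
    have hgt0 : 0 ≤ g t := by
      have := hglow t (right_mem_Icc.2 hat)
      nlinarith [mul_nonneg (sub_nonneg.2 hat) h1.le]
    -- find δ > 0 with g ≥ 0 on [a, t+δ]
    obtain ⟨δ, hδ, hgnn⟩ : ∃ δ > 0, ∀ s ∈ Icc a (t + δ), 0 ≤ g s := by
      rcases lt_or_eq_of_le hgt0 with hgt | hgt
      · -- g t > 0 : g > 0 near t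
        have hcont : ContinuousAt g t := (hg' t hat).continuousAt
        have hev : ∀ᶠ x in nhds t, g x ∈ Ioi (0:ℝ) :=
          hcont.eventually_mem (isOpen_Ioi.mem_nhds hgt)
        rw [Metric.eventually_nhds_iff] at hev
        obtain ⟨ε, hε, hball⟩ := hev
        refine ⟨ε/2, by linarith, fun s hs => ?_⟩
        rcases le_or_gt s t with h | h
        · have := hglow s ⟨hs.1, h⟩
          nlinarith [mul_nonneg (sub_nonneg.2 hs.1) h1.le]
        · have : dist s t < ε := by
            rw [Real.dist_eq, abs_of_pos (by linarith)]
            have := hs.2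
            linarith
          exact (hball this).le
      · -- g t = 0 forces t = a
        have hta : t = a := by
          by_contra hne
          have hlt : a < t := lt_of_le_of_ne hat (Ne.symm hne)
          have := hglow t (right_mem_Icc.2 hat)
          nlinarith [mul_pos (sub_pos.2 hlt) h1]
        have hcont : ContinuousAt g' a := (hg'' a le_rfl).continuousAt
        have hev : ∀ᶠ x in nhds a, g' x ∈ Ioi (0:ℝ) :=
          hcont.eventually_mem (isOpen_Ioi.mem_nhds h1)
        rw [Metric.eventually_nhds_iff] at hev
        obtain ⟨ε, hε, hball⟩ := hev
        refine ⟨ε/2, by linarith, fun s hs => ?_⟩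
        rw [hta] at hs
        have hs1 := hs.1
        have hs2 := hs.2
        have hmono : g a + (s - a) * 0 ≤ g s := by
          refine lin_lower g g' a s 0 hs1 (fun x hx => hg' x hx.1) (fun x hx => ?_)
          have : dist x a < ε := by
            rw [Real.dist_eq, abs_of_nonneg (by linarith [hx.1])]
            have := hx.2
            linarith
          exact (hball this).le
        nlinarith
    -- g'' ≥ 0 on [a, t+δ], so g' monotone, contradiction with point of B below t+δ
    have hg'ge : ∀ s ∈ Icc a (t + δ), g' a ≤ g' s := by
      intro s hs
      have := lin_lower g' g'' a s 0 hs.1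
        (fun x hx => hg'' x hx.1)
        (fun x hx => hpos x hx.1 (hgnn x ⟨hx.1, hx.2.trans hs.2⟩))
      linarith
    obtain ⟨b, hbB, hbt⟩ : ∃ b ∈ B, b < t + δ := by
      have : sInf B < t + δ := by linarith
      exact exists_lt_of_csInf_lt hBne this
    exact absurd (hg'ge b ⟨hbB.1, hbt.le⟩) (not_le.2 hbB.2)
  intro r hr
  refine ⟨key r hr, ?_⟩
  exact lin_lower g g' a r (g' a) hr (fun x hx => hg' x hx.1) (fun x hx => key x hx.1)

/-- Recurrence criterion: if 0 ≤ k ≤ Λ on [0,R] and 0 ≤ k(r) ≤ 1/(r² log r) for r > R,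
then the Jacobi field f with potential k is positive on (0,∞) and ∫_e^∞ dr/f(r) = +∞. -/
theorem stmt_8 (R Λ : ℝ) (hR : 1 < R) (hΛ : 0 ≤ Λ) (k f : ℝ → ℝ)
    (hk : Continuous k)
    (hk1 : ∀ r ∈ Set.Icc (0 : ℝ) R, 0 ≤ k r ∧ k r ≤ Λ)
    (hk2 : ∀ r > R, 0 ≤ k r ∧ k r ≤ 1 / (r ^ 2 * Real.log r))
    (hf : ContDiff ℝ 2 f)
    (hf'' : ∀ r ≥ 0, deriv (deriv f) r = k r * f r)
    (hf0 : f 0 = 0) (hf'0 : deriv f 0 = 1) :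
    (∀ r > 0, 0 < f r) ∧
      ∫⁻ r in Set.Ioi (Real.exp 1), ENNReal.ofReal (1 / f r) = ⊤ := by
  -- basic differentiability
  have hfd : Differentiable ℝ f := hf.differentiable (by norm_num)
  have hfd2 : Differentiable ℝ (deriv f) := by
    have h2 : ContDiff ℝ ((1:ℕ) + 1) f := by exact_mod_cast hf
    exact ((contDiff_succ_iff_deriv).1 h2).2.2.differentiable (by norm_num)
  have hd1 : ∀ r : ℝ, HasDerivAt f (deriv f r) r := fun r => (hfd r).hasDerivAt
  have hkpos : ∀ r : ℝ, 0 ≤ r → 0 ≤ k r := by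
    intro r hr
    rcases le_or_gt r R with h | h
    · exact (hk1 r ⟨hr, h⟩).1
    · exact (hk2 r h).1
  have hd2 : ∀ r : ℝ, (0:ℝ) ≤ r → HasDerivAt (deriv f) (k r * f r) r := by
    intro r hr
    have := (hfd2 r).hasDerivAt
    rwa [hf'' r hr] at this
  -- Part A : f r ≥ r and deriv f ≥ 1 on [0,∞)
  have partA := persist f (deriv f) (fun r => k r * f r) 0
    (fun r _ => hd1 r) hd2 (le_of_eq hf0.symm) (by rw [hf'0]; norm_num)
    (fun r hr hgr => mul_nonneg (hkpos r hr) hgr)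
  have hfpos : ∀ r : ℝ, 0 < r → 0 < f r := by
    intro r hr
    have := (partA r hr.le).2
    rw [hf0, hf'0] at this
    simp only [sub_zero, mul_one, zero_add] at this
    linarith
  have hf'ge : ∀ r : ℝ, 0 ≤ r → 1 ≤ deriv f r := by
    intro r hr
    have := (partA r hr).1
    rwa [hf'0] at this
  set R₀ : ℝ := R + 3 with hR₀def
  have hR₀4 : 4 < R₀ := by rw [hR₀def]; linarith
  have hR₀pos : (0:ℝ) < R₀ := by linarith
  have hlogR₀ : 1 < Real.log R₀ := by
    rw [Real.lt_log_iff_exp_lt hR₀pos]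
    have := Real.exp_one_lt_d9
    linarith
  set C : ℝ := f R₀ + deriv f R₀ with hCdef
  have hfR₀ : 0 < f R₀ := hfpos R₀ hR₀pos
  have hf'R₀ : 1 ≤ deriv f R₀ := hf'ge R₀ hR₀pos.le
  have hC : 0 < C := by rw [hCdef]; linarith
  -- Part B : f r ≤ C * (r * log r) on [R₀, ∞)
  have hw' : ∀ r : ℝ, R₀ ≤ r →
      HasDerivAt (fun x => C * (x * Real.log x) - f x)
        ((fun x => C * (Real.log x + 1) - deriv f x) r) r := by
    intro r hr
    have hr0 : (0:ℝ) < r := by linarith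
    have h1 : HasDerivAt (fun x => x * Real.log x) (Real.log r + 1) r := by
      have := (hasDerivAt_id r).mul (Real.hasDerivAt_log hr0.ne')
      refine this.congr_deriv ?_
      simp [hr0.ne']
    exact (h1.const_mul C).sub (hd1 r)
  have hw'' : ∀ r : ℝ, R₀ ≤ r →
      HasDerivAt (fun x => C * (Real.log x + 1) - deriv f x)
        ((fun x => C * x⁻¹ - k x * f x) r) r := by
    intro r hr
    have hr0 : (0:ℝ) < r := by linarith
    have h1 : HasDerivAt (fun x => C * (Real.log x + 1)) (C * r⁻¹) r :=
      ((Real.hasDerivAt_log hr0.ne').add_const 1).const_mul C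
    exact h1.sub (hd2 r (by linarith))
  have hw0 : (0:ℝ) ≤ C * (R₀ * Real.log R₀) - f R₀ := by
    have h1 : 1 ≤ R₀ * Real.log R₀ := by nlinarith
    nlinarith [mul_le_mul_of_nonneg_left h1 hC.le]
  have hw'0 : (0:ℝ) < C * (Real.log R₀ + 1) - deriv f R₀ := by
    nlinarith [mul_lt_mul_of_pos_left (show (2:ℝ) < Real.log R₀ + 1 by linarith) hC]
  have hwpos : ∀ r : ℝ, R₀ ≤ r → 0 ≤ C * (r * Real.log r) - f r →
      0 ≤ C * r⁻¹ - k r * f r := by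
    intro r hr hw
    have hr0 : (0:ℝ) < r := by linarith
    have hrR : R < r := by rw [hR₀def] at hr; linarith
    have hlogr : 1 < Real.log r :=
      lt_of_lt_of_le hlogR₀ ((Real.log_le_log_iff hR₀pos hr0).2 hr)
    have hfr : 0 < f r := hfpos r hr0
    have hfle : f r ≤ C * (r * Real.log r) := by linarith
    have hk2r := hk2 r hrR
    have hden : 0 < r ^ 2 * Real.log r := by
      have := pow_pos hr0 2
      nlinarith
    have h1 : k r * f r ≤ (1 / (r ^ 2 * Real.log r)) * (C * (r * Real.log r)) := by
      calc k r * f r ≤ k r * (C * (r * Real.log r)) :=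
            mul_le_mul_of_nonneg_left hfle hk2r.1
        _ ≤ (1 / (r ^ 2 * Real.log r)) * (C * (r * Real.log r)) := by
            apply mul_le_mul_of_nonneg_right hk2r.2
            have : (0:ℝ) < r * Real.log r := by nlinarith
            nlinarith
    have h2 : (1 / (r ^ 2 * Real.log r)) * (C * (r * Real.log r)) = C * r⁻¹ := by
      have hlogne : Real.log r ≠ 0 := by linarith
      field_simp
    rw [h2] at h1
    linarith
  have partB := persist (fun x => C * (x * Real.log x) - f x)
    (fun x => C * (Real.log x + 1) - deriv f x)
    (fun x => C * x⁻¹ - k x * f x) R₀ hw' hw'' hw0 hw'0 hwpos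
  have hfle : ∀ r : ℝ, R₀ ≤ r → f r ≤ C * (r * Real.log r) := by
    intro r hr
    have h1 := (partB r hr).2
    nlinarith [mul_nonneg (show (0:ℝ) ≤ r - R₀ by linarith) hw'0.le]
  -- Part C : divergence of the lintegral
  have hposh : ∀ r ∈ Set.Ioi R₀, 0 < C * (r * Real.log r) := by
    intro r hr
    rw [Set.mem_Ioi] at hr
    have hr0 : (0:ℝ) < r := by linarith
    have hlogr : 1 < Real.log r :=
      lt_of_lt_of_le hlogR₀ ((Real.log_le_log_iff hR₀pos hr0).2 hr.le)
    exact mul_pos hC (mul_pos hr0 (by linarith))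
  have hkey : ∫⁻ r in Set.Ioi R₀, ENNReal.ofReal (1 / f r) = ⊤ := by
    have hmeas : Measurable fun r : ℝ => ENNReal.ofReal (1 / f r) :=
      ENNReal.measurable_ofReal.comp (measurable_const.div hf.continuous.measurable)
    have hstep : ∫⁻ r in Set.Ioi R₀, ENNReal.ofReal (1 / (C * (r * Real.log r)))
        ≤ ∫⁻ r in Set.Ioi R₀, ENNReal.ofReal (1 / f r) := by
      refine setLIntegral_mono hmeas fun r hr => ?_
      rw [Set.mem_Ioi] at hr
      have hfr : 0 < f r := hfpos r (by linarith)
      exact ENNReal.ofReal_le_ofReal (one_div_le_one_div_of_le hfr (hfle r hr.le))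
    suffices htop : ∫⁻ r in Set.Ioi R₀,
        ENNReal.ofReal (1 / (C * (r * Real.log r))) = ⊤ by
      rw [htop] at hstep
      exact top_le_iff.1 hstep
    by_contra hne
    have hlt : ∫⁻ r in Set.Ioi R₀, ENNReal.ofReal (1 / (C * (r * Real.log r))) < ⊤ :=
      lt_top_iff_ne_top.2 hne
    have hmeash : AEStronglyMeasurable (fun r : ℝ => 1 / (C * (r * Real.log r)))
        (volume.restrict (Set.Ioi R₀)) := by
      apply Measurable.aestronglyMeasurable
      exact measurable_const.div ((measurable_id.mul Real.measurable_log).const_mul C)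
    have hae : 0 ≤ᵐ[volume.restrict (Set.Ioi R₀)]
        fun r : ℝ => 1 / (C * (r * Real.log r)) := by
      filter_upwards [ae_restrict_mem measurableSet_Ioi] with r hr
      exact le_of_lt (one_div_pos.2 (hposh r hr))
    have hfin : HasFiniteIntegral (fun r : ℝ => 1 / (C * (r * Real.log r)))
        (volume.restrict (Set.Ioi R₀)) := (hasFiniteIntegral_iff_ofReal hae).2 hlt
    have hInt : IntegrableOn (fun r : ℝ => 1 / (C * (r * Real.log r))) (Set.Ioi R₀) :=
      ⟨hmeash, hfin⟩
    set I : ℝ := ∫ r in Set.Ioi R₀, 1 / (C * (r * Real.log r)) with hIdef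
    have hI0 : 0 ≤ I :=
      setIntegral_nonneg measurableSet_Ioi fun r hr => le_of_lt (one_div_pos.2 (hposh r hr))
    set T : ℝ := Real.exp (Real.exp (C * (I + 1) + Real.log (Real.log R₀))) with hTdef
    have hlogT : Real.log T = Real.exp (C * (I + 1) + Real.log (Real.log R₀)) := by
      rw [hTdef, Real.log_exp]
    have hloglogT : Real.log (Real.log T) = C * (I + 1) + Real.log (Real.log R₀) := by
      rw [hlogT, Real.log_exp]
    have hlogR₀pos : 0 < Real.log R₀ := by linarith
    have hlogTpos : 0 < Real.log T := by rw [hlogT]; exact Real.exp_pos _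
    have hlogR₀T : Real.log R₀ < Real.log T := by
      have h1 : Real.log (Real.log R₀) < Real.log (Real.log T) := by
        rw [hloglogT]
        nlinarith
      calc Real.log R₀ = Real.exp (Real.log (Real.log R₀)) := (Real.exp_log hlogR₀pos).symm
        _ < Real.exp (Real.log (Real.log T)) := Real.exp_lt_exp.2 h1
        _ = Real.log T := Real.exp_log hlogTpos
    have hR₀T : R₀ < T := by
      calc R₀ = Real.exp (Real.log R₀) := (Real.exp_log hR₀pos).symm
        _ < Real.exp (Real.log T) := Real.exp_lt_exp.2 hlogR₀T
        _ = T := Real.exp_log (by rw [hTdef]; exact Real.exp_pos _)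
    have hderivF : ∀ r ∈ Set.uIcc R₀ T,
        HasDerivAt (fun x => C⁻¹ * Real.log (Real.log x)) (1 / (C * (r * Real.log r))) r := by
      intro r hr
      rw [Set.uIcc_of_le hR₀T.le] at hr
      have hr0 : (0:ℝ) < r := by linarith [hr.1]
      have hlogr : 1 < Real.log r :=
        lt_of_lt_of_le hlogR₀ ((Real.log_le_log_iff hR₀pos hr0).2 hr.1)
      have hlogne : Real.log r ≠ 0 := by linarith
      have h1 : HasDerivAt (fun x => Real.log (Real.log x)) ((Real.log r)⁻¹ * r⁻¹) r :=
        (Real.hasDerivAt_log hlogne).comp r (Real.hasDerivAt_log hr0.ne')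
      have h2 := h1.const_mul C⁻¹
      refine h2.congr_deriv ?_
      rw [one_div, mul_inv, mul_inv]
      ring
    have hIntvl : IntervalIntegrable (fun r : ℝ => 1 / (C * (r * Real.log r))) volume R₀ T :=
      (intervalIntegrable_iff_integrableOn_Ioc_of_le hR₀T.le).2
        (hInt.mono_set Set.Ioc_subset_Ioi_self)
    have hFTC := intervalIntegral.integral_eq_sub_of_hasDerivAt hderivF hIntvl
    have hval : ∫ r in R₀..T, 1 / (C * (r * Real.log r)) = I + 1 := by
      rw [hFTC, hloglogT]
      field_simp
      ring
    have hle : ∫ r in R₀..T, 1 / (C * (r * Real.log r)) ≤ I := by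
      rw [intervalIntegral.integral_of_le hR₀T.le, hIdef]
      exact setIntegral_mono_set hInt hae
        (HasSubset.Subset.eventuallyLE Set.Ioc_subset_Ioi_self)
    rw [hval] at hle
    linarith
  refine ⟨fun r hr => hfpos r hr, ?_⟩
  refine top_le_iff.1 ?_
  calc (⊤ : ENNReal) = ∫⁻ r in Set.Ioi R₀, ENNReal.ofReal (1 / f r) := hkey.symm
    _ ≤ _ := lintegral_mono_set (Set.Ioi_subset_Ioi (by
        have := Real.exp_one_lt_d9
        linarith))
end
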